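/- Let 0 < p < 1 < q satisfy p·φ(p) = q·φ(q), and let G(ω) = χ(ω ∈ (−q,−p) ∪ (p,q)). Then the Hermite coefficients C_j = ∫ G(ω)H_j(ω)φ(ω)dω satisfy C₁ = C₂ = C₃ = 0 and C₄ = 2(p³φ(p) − q³φ(q)) < 0; hence G − E G has Hermite rank 4. -/

import Mathlib

open MeasureTheory

noncomputable def gaussPDF (x : ℝ) : ℝ :=
  (Real.sqrt (2 * Real.pi))⁻¹ * Real.exp (-x ^ 2 / 2)

lemma gaussPDF_pos (x : ℝ) : 0 < gaussPDF x := by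
  unfold gaussPDF
  have h2 : (0:ℝ) < 2 * Real.pi := by positivity
  positivity

lemma gaussPDF_neg (x : ℝ) : gaussPDF (-x) = gaussPDF x := by
  simp [gaussPDF, neg_pow]

lemma gaussPDF_continuous : Continuous gaussPDF := by
  unfold gaussPDF
  fun_prop

lemma gaussPDF_hasDerivAt (x : ℝ) : HasDerivAt gaussPDF (-x * gaussPDF x) x := by
  have h1 : HasDerivAt (fun x : ℝ => -x ^ 2 / 2) (-x) x := by
    have := ((hasDerivAt_pow 2 x).neg).div_const 2
    exact this.congr_deriv (by ring)
  have h2 := (h1.exp).const_mul (Real.sqrt (2 * Real.pi))⁻¹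
  refine h2.congr_deriv ?_
  unfold gaussPDF
  ring

lemma gauss_interval (a b : ℝ) (P F : ℝ → ℝ) (hP : Continuous P)
    (hF : ∀ x, HasDerivAt F (P x * gaussPDF x) x) :
    ∫ x in a..b, P x * gaussPDF x = F b - F a :=
  intervalIntegral.integral_eq_sub_of_hasDerivAt (fun x _ => hF x)
    ((hP.mul gaussPDF_continuous).intervalIntegrable a b)

lemma gauss_total (p q : ℝ) (hpq : p < q) (hp : -p < p) (G : ℝ → ℝ)
    (hG : ∀ w, G w = if (-q < w ∧ w < -p) ∨ (p < w ∧ w < q) then 1 else 0)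
    (P F : ℝ → ℝ) (hP : Continuous P)
    (hF : ∀ x, HasDerivAt F (P x * gaussPDF x) x) :
    ∫ w, G w * P w * gaussPDF w = (F (-p) - F (-q)) + (F q - F p) := by
  have hqq : -q < -p := by linarith
  have hcont : Continuous fun w => P w * gaussPDF w := hP.mul gaussPDF_continuous
  have hind : ∀ w, G w * P w * gaussPDF w =
      Set.indicator (Set.Ioo (-q) (-p) ∪ Set.Ioo p q) (fun w => P w * gaussPDF w) w := by
    intro w
    rw [hG]
    by_cases h : (-q < w ∧ w < -p) ∨ (p < w ∧ w < q)
    · rw [if_pos h, Set.indicator_of_mem]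
      · ring
      · simpa [Set.mem_Ioo] using h
    · rw [if_neg h, Set.indicator_of_notMem]
      · ring
      · simpa [Set.mem_Ioo] using h
  have hdisj : Disjoint (Set.Ioo (-q) (-p)) (Set.Ioo p q) := by
    rw [Set.disjoint_left]
    intro x hx hx'
    simp only [Set.mem_Ioo] at hx hx'
    linarith [hx.2, hx'.1]
  have hmeas : MeasurableSet (Set.Ioo (-q) (-p) ∪ Set.Ioo p q) :=
    measurableSet_Ioo.union measurableSet_Ioo
  have hint1 : IntegrableOn (fun w => P w * gaussPDF w) (Set.Ioo (-q) (-p)) :=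
    (hcont.integrableOn_Icc (a := -q) (b := -p)).mono_set Set.Ioo_subset_Icc_self
  have hint2 : IntegrableOn (fun w => P w * gaussPDF w) (Set.Ioo p q) :=
    (hcont.integrableOn_Icc (a := p) (b := q)).mono_set Set.Ioo_subset_Icc_self
  calc ∫ w, G w * P w * gaussPDF w
      = ∫ w, Set.indicator (Set.Ioo (-q) (-p) ∪ Set.Ioo p q)
          (fun w => P w * gaussPDF w) w := by
        congr 1; funext w; exact hind w
    _ = ∫ w in Set.Ioo (-q) (-p) ∪ Set.Ioo p q, P w * gaussPDF w :=
        integral_indicator hmeas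
    _ = (∫ w in Set.Ioo (-q) (-p), P w * gaussPDF w)
         + ∫ w in Set.Ioo p q, P w * gaussPDF w :=
        setIntegral_union hdisj measurableSet_Ioo hint1 hint2
    _ = (∫ w in (-q)..(-p), P w * gaussPDF w) + ∫ w in p..q, P w * gaussPDF w := by
        rw [intervalIntegral.integral_of_le (le_of_lt hqq),
          intervalIntegral.integral_of_le (le_of_lt hpq),
          integral_Ioc_eq_integral_Ioo]
        rw [integral_Ioc_eq_integral_Ioo]
    _ = (F (-p) - F (-q)) + (F q - F p) := by
        rw [gauss_interval _ _ _ _ hP hF, gauss_interval _ _ _ _ hP hF]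

theorem hermite_rank_four_example (p q : ℝ) (hp : 0 < p) (hp1 : p < 1) (hq : 1 < q)
    (hpq : p * gaussPDF p = q * gaussPDF q)
    (G : ℝ → ℝ) (hG : ∀ w, G w = if (-q < w ∧ w < -p) ∨ (p < w ∧ w < q) then 1 else 0) :
    (∫ w, G w * w * gaussPDF w) = 0 ∧
    (∫ w, G w * (w ^ 2 - 1) * gaussPDF w) = 0 ∧
    (∫ w, G w * (w ^ 3 - 3 * w) * gaussPDF w) = 0 ∧
    (∫ w, G w * (w ^ 4 - 6 * w ^ 2 + 3) * gaussPDF w) =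
      2 * (p ^ 3 * gaussPDF p - q ^ 3 * gaussPDF q) ∧
    2 * (p ^ 3 * gaussPDF p - q ^ 3 * gaussPDF q) < 0 := by
  have hpq' : p < q := by linarith
  have hpp : -p < p := by linarith
  have hF1 : ∀ x : ℝ, HasDerivAt (fun x : ℝ => -gaussPDF x) (x * gaussPDF x) x := by
    intro x
    have := (gaussPDF_hasDerivAt x).neg
    exact this.congr_deriv (by ring)
  have hF2 : ∀ x : ℝ, HasDerivAt (fun x : ℝ => -x * gaussPDF x)
      ((x ^ 2 - 1) * gaussPDF x) x := by
    intro x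
    have hneg : HasDerivAt (fun x : ℝ => -x) (-1) x := by
      exact (hasDerivAt_id x).neg
    have h := hneg.mul (gaussPDF_hasDerivAt x)
    exact h.congr_deriv (by ring)
  have hF3 : ∀ x : ℝ, HasDerivAt (fun x : ℝ => -(x ^ 2 - 1) * gaussPDF x)
      ((x ^ 3 - 3 * x) * gaussPDF x) x := by
    intro x
    have hp2 : HasDerivAt (fun x : ℝ => -(x ^ 2 - 1)) (-(2 * x ^ 1)) x := by
      exact_mod_cast ((hasDerivAt_pow 2 x).sub_const 1).neg
    have h := hp2.mul (gaussPDF_hasDerivAt x)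
    exact h.congr_deriv (by ring)
  have hF4 : ∀ x : ℝ, HasDerivAt (fun x : ℝ => -(x ^ 3 - 3 * x) * gaussPDF x)
      ((x ^ 4 - 6 * x ^ 2 + 3) * gaussPDF x) x := by
    intro x
    have hp3 : HasDerivAt (fun x : ℝ => -(x ^ 3 - 3 * x)) (-(3 * x ^ 2 - 3)) x := by
      have h1 : HasDerivAt (fun x : ℝ => x ^ 3) (3 * x ^ 2) x := by
        have := hasDerivAt_pow 3 x
        norm_num at this
        exact this
      have h2 : HasDerivAt (fun x : ℝ => 3 * x) 3 x := by
        simpa using (hasDerivAt_id x).const_mul (3 : ℝ)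
      exact (h1.sub h2).neg
    have h := hp3.mul (gaussPDF_hasDerivAt x)
    exact h.congr_deriv (by ring)
  have e1 := gauss_total p q hpq' hpp G hG _ _ continuous_id (by exact hF1)
  have e2 := gauss_total p q hpq' hpp G hG _ _ (by fun_prop) hF2
  have e3 := gauss_total p q hpq' hpp G hG _ _ (by fun_prop) hF3
  have e4 := gauss_total p q hpq' hpp G hG _ _ (by fun_prop) hF4
  simp only [gaussPDF_neg] at e1 e2 e3 e4
  have hqpos : 0 < gaussPDF q := gaussPDF_pos q
  refine ⟨?_, ?_, ?_, ?_, ?_⟩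
  · rw [show (fun w => G w * w * gaussPDF w) = fun w => G w * id w * gaussPDF w from rfl, e1]
    ring
  · rw [e2]; linear_combination 2 * hpq
  · rw [e3]; ring
  · rw [e4]; linear_combination (-6 : ℝ) * hpq
  · have hc : 0 < q * gaussPDF q := mul_pos (by linarith) hqpos
    have h1 : p ^ 3 * gaussPDF p = p ^ 2 * (q * gaussPDF q) := by
      rw [← hpq]; ring
    have h2 : q ^ 3 * gaussPDF q = q ^ 2 * (q * gaussPDF q) := by ring
    have hsq : p ^ 2 < q ^ 2 := by nlinarith
    nlinarith [mul_lt_mul_of_pos_right hsq hc]
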